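/- There exists a set-valued mapping M : ℝ ⇉ ℝ such that clm M(y,x) = 0 for every (y,x) in the graph of M, yet Lipusc M(0) = +∞. Concretely, M(y) = {0} for y ≤ 0 and M(y) = {1} for y > 0 has this property. -/

import Mathlib

open Metric ENNReal

/-- Lipschitz upper semicontinuity modulus of a set-valued mapping `M` at `ȳ ∈ dom M`:
the infimum (in `ℝ≥0∞`, so `inf ∅ = ∞`) of constants `κ ≥ 0` such that for some
neighborhood `V` of `ȳ`, `dist(x, M(ȳ)) ≤ κ dist(y, ȳ)` for all `y ∈ V`, `x ∈ M(y)`. -/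
noncomputable def lipusc {Y X : Type*} [MetricSpace Y] [MetricSpace X]
    (M : Y → Set X) (ybar : Y) : ℝ≥0∞ :=
  sInf (ENNReal.ofReal '' {κ : ℝ | 0 ≤ κ ∧ ∃ V ∈ nhds ybar,
    ∀ y ∈ V, ∀ x ∈ M y, infDist x (M ybar) ≤ κ * dist y ybar})

/-- Calmness modulus of `M` at `(ȳ, x̄) ∈ gph M`. -/
noncomputable def clmod {Y X : Type*} [MetricSpace Y] [MetricSpace X]
    (M : Y → Set X) (ybar : Y) (xbar : X) : ℝ≥0∞ :=
  sInf (ENNReal.ofReal '' {κ : ℝ | 0 ≤ κ ∧ ∃ V ∈ nhds ybar, ∃ U ∈ nhds xbar,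
    ∀ y ∈ V, ∀ x ∈ M y ∩ U, infDist x (M ybar) ≤ κ * dist y ybar})


/-- There is a multifunction `M : ℝ ⇉ ℝ` with zero calmness modulus at every point
of its graph but infinite Lipschitz upper semicontinuity modulus at `0`:
`M(y) = {0}` for `y ≤ 0` and `M(y) = {1}` for `y > 0`. -/
theorem stmt4 :
    ∃ M : ℝ → Set ℝ,
      M = (fun y => if y ≤ 0 then ({0} : Set ℝ) else {1}) ∧
      (∀ y x, x ∈ M y → clmod M y x = 0) ∧ lipusc M 0 = ⊤ := by
  refine ⟨fun y => if y ≤ 0 then ({0} : Set ℝ) else {1}, rfl, ?_, ?_⟩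
  · intro y x hx
    apply le_antisymm _ zero_le
    rw [clmod]
    have h0 : (0 : ℝ≥0∞) = ENNReal.ofReal 0 := by simp
    rw [h0]
    apply sInf_le
    refine Set.mem_image_of_mem _ ?_
    refine ⟨le_refl 0, ?_⟩
    rcases lt_trichotomy y 0 with hy | hy | hy
    · refine ⟨Set.Iio 0, Iio_mem_nhds hy, Set.univ, Filter.univ_mem, ?_⟩
      intro y' hy' x' hx'
      simp only [Set.mem_Iio] at hy'
      simp only [if_pos hy'.le, if_pos hy.le, Set.mem_inter_iff,
        Set.mem_singleton_iff] at hx' ⊢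
      simp [hx'.1, Metric.infDist_singleton]
    · subst hy
      simp only [if_pos le_rfl, Set.mem_singleton_iff] at hx
      subst hx
      refine ⟨Set.univ, Filter.univ_mem, Metric.ball 0 (1/2),
        Metric.ball_mem_nhds _ (by norm_num), ?_⟩
      intro y' _ x' hx'
      simp only [if_pos le_rfl]
      by_cases h : y' ≤ 0
      · simp only [if_pos h, Set.mem_inter_iff, Set.mem_singleton_iff] at hx'
        simp [hx'.1, Metric.infDist_singleton]
      · exfalso
        simp only [if_neg h, Set.mem_inter_iff, Set.mem_singleton_iff] at hx'
        obtain ⟨rfl, hb⟩ := hx'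
        rw [Metric.mem_ball, Real.dist_eq] at hb
        norm_num at hb
    · refine ⟨Set.Ioi 0, Ioi_mem_nhds hy, Set.univ, Filter.univ_mem, ?_⟩
      intro y' hy' x' hx'
      simp only [Set.mem_Ioi] at hy'
      simp only [if_neg (not_le.2 hy'), if_neg (not_le.2 hy), Set.mem_inter_iff,
        Set.mem_singleton_iff] at hx' ⊢
      simp [hx'.1, Metric.infDist_singleton]
  · rw [lipusc]
    convert sInf_empty using 2
    · rfl
    rw [Set.image_eq_empty, Set.eq_empty_iff_forall_notMem]
    rintro κ ⟨hκ, V, hV, hall⟩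
    obtain ⟨ε, hε, hball⟩ := Metric.mem_nhds_iff.1 hV
    set y : ℝ := min (ε/2) (1/(κ+1)) with hy
    have hy0 : 0 < y := lt_min (by linarith) (by positivity)
    have hyV : y ∈ V := by
      apply hball
      rw [Metric.mem_ball, Real.dist_eq, sub_zero, abs_of_pos hy0]
      calc y ≤ ε/2 := min_le_left _ _
        _ < ε := by linarith
    have h1 : (1 : ℝ) ∈ (if y ≤ 0 then ({0} : Set ℝ) else {1}) := by
      rw [if_neg (not_le.2 hy0)]; rfl
    have hkey := hall y hyV 1 h1
    rw [if_pos le_rfl, Metric.infDist_singleton, Real.dist_eq, Real.dist_eq,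
      sub_zero, sub_zero, abs_of_pos hy0] at hkey
    norm_num at hkey
    have hle : y ≤ 1/(κ+1) := min_le_right _ _
    have hκ1 : (0:ℝ) < κ + 1 := by linarith
    have : κ * y ≤ κ * (1/(κ+1)) := mul_le_mul_of_nonneg_left hle hκ
    have hlt : κ * (1/(κ+1)) < 1 := by
      rw [mul_one_div, div_lt_one hκ1]; linarith
    linarith
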